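/- arXiv:2202.02208 — 3 statements merged into one kernel-verified Lean document; each statement's English description precedes it below -/
import Mathlib

section
/- Let f ∈ C^∞(ℝ^d;ℝ) satisfy the Morse–Bott assumption, let Γ be a critical submanifold on which Hess f has j ≥ 2 negative eigenvalues, and set σ = f(Γ). Then for all sufficiently small r > 0 the set X_σ ∩ (Γ + B(0,r)) is connected, where Γ + B(0,r) denotes the set of points at distance less than r from Γ. -/
open Metric Set

noncomputable section

/-- `Γ + B(0, r)`: the set of points at (Euclidean) distance less than `r` from `Γ`. -/
def tub {d : ℕ} (Γ : Set (EuclideanSpace ℝ (Fin d))) (r : ℝ) :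
    Set (EuclideanSpace ℝ (Fin d)) :=
  {x | ∃ y ∈ Γ, dist x y < r}

/-- The sublevel set `X_σ = {x : f x < σ}`. -/
def subLevel {d : ℕ} (f : EuclideanSpace ℝ (Fin d) → ℝ) (σ : ℝ) :
    Set (EuclideanSpace ℝ (Fin d)) :=
  {x | f x < σ}

/-- **Morse–Bott assumption for a single critical submanifold**, encoded through the
Morse–Bott lemma: `Γ ⊆ ℝ^d` is a boundaryless compact connected submanifold of dimension
`dΓ` consisting of critical points of `f`, on which the transversal Hessian of `f` is
nondegenerate with exactly `j` negative eigenvalues; equivalently, around each point of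
`Γ` there are smooth local coordinates `(y_t, y_-, y_+) ∈ ℝ^{dΓ} × ℝ^{j} × ℝ^{d-dΓ-j}`
straightening `Γ` to `{y_- = 0, y_+ = 0}` in which
`f = f(Γ) - |y_-|² + |y_+|²`. -/
def IsMorseBottManifold (d dΓ j : ℕ) (f : EuclideanSpace ℝ (Fin d) → ℝ)
    (Γ : Set (EuclideanSpace ℝ (Fin d))) : Prop :=
  IsCompact Γ ∧ IsConnected Γ ∧ (∀ x ∈ Γ, gradient f x = 0) ∧
  ∀ a ∈ Γ, ∃ (U : Set (EuclideanSpace ℝ (Fin d)))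
    (φ : EuclideanSpace ℝ (Fin d) →
      EuclideanSpace ℝ (Fin dΓ) × EuclideanSpace ℝ (Fin j) ×
        EuclideanSpace ℝ (Fin (d - dΓ - j)))
    (ψ : EuclideanSpace ℝ (Fin dΓ) × EuclideanSpace ℝ (Fin j) ×
        EuclideanSpace ℝ (Fin (d - dΓ - j)) → EuclideanSpace ℝ (Fin d)),
    IsOpen U ∧ a ∈ U ∧
    ContDiffOn ℝ (⊤ : ℕ∞) φ U ∧ IsOpen (φ '' U) ∧
    ContDiffOn ℝ (⊤ : ℕ∞) ψ (φ '' U) ∧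
    (∀ x ∈ U, ψ (φ x) = x) ∧ (∀ y ∈ φ '' U, φ (ψ y) = y) ∧
    Γ ∩ U = {x ∈ U | (φ x).2.1 = 0 ∧ (φ x).2.2 = 0} ∧
    (∀ x ∈ U, f x = f a - ‖(φ x).2.1‖ ^ 2 + ‖(φ x).2.2‖ ^ 2)

/-- `S` has exactly two connected components, namely `Aplus` and `Aminus`. -/
def HasExactlyTwoComponents {d : ℕ} (S Aplus Aminus : Set (EuclideanSpace ℝ (Fin d))) : Prop :=
  Aplus.Nonempty ∧ Aminus.Nonempty ∧ Aplus ∪ Aminus = S ∧ Disjoint Aplus Aminus ∧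
  (∀ x ∈ Aplus, connectedComponentIn S x = Aplus) ∧ (∀ x ∈ Aminus, connectedComponentIn S x = Aminus)


lemma aux_punctured_ball {E : Type*} [NormedAddCommGroup E] [NormedSpace ℝ E]
    (h : 1 < Module.rank ℝ E) {β : ℝ} (hβ : 0 < β) :
    IsPreconnected (ball (0:E) β \ {0}) := by
  have : ball (0:E) β \ {0} =
      (fun su : ℝ × E => su.1 • su.2) '' (Ioo (0:ℝ) β ×ˢ sphere (0:E) 1) := by
    ext m
    constructor
    · rintro ⟨hm, hm0⟩
      have hm0' : m ≠ 0 := hm0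
      have hnm : 0 < ‖m‖ := norm_pos_iff.2 hm0'
      refine ⟨(‖m‖, ‖m‖⁻¹ • m), ⟨⟨hnm, by simpa using hm⟩, ?_⟩, ?_⟩
      · simp [norm_smul, abs_of_nonneg (inv_nonneg.2 (norm_nonneg m)),
          inv_mul_cancel₀ hnm.ne']
      · simp [smul_smul, mul_inv_cancel₀ hnm.ne']
    · rintro ⟨⟨s, u⟩, ⟨⟨hs0, hsβ⟩, hu⟩, rfl⟩
      have hu1 : ‖u‖ = 1 := by simpa using hu
      constructor
      · have hs0' : (0:ℝ) < s := hs0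
        have hsβ' : s < β := hsβ
        simp only [mem_ball, dist_zero_right, norm_smul, hu1, mul_one, Real.norm_eq_abs]
        rwa [abs_of_pos hs0']
      · simp only [mem_singleton_iff, smul_eq_zero, not_or]
        exact ⟨hs0.ne', fun h0 => by simp [h0] at hu1⟩
  rw [this]
  apply IsPreconnected.image
  · exact (isPreconnected_Ioo.prod (isConnected_sphere h 0 zero_le_one).isPreconnected)
  · exact (continuous_fst.smul continuous_snd).continuousOn

lemma aux_lambda {F₁ F₂ : Type*} [NormedAddCommGroup F₁] [NormedSpace ℝ F₁]
    [NormedAddCommGroup F₂] [NormedSpace ℝ F₂]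
    (h : 1 < Module.rank ℝ F₁) {β : ℝ} (hβ : 0 < β) :
    IsPreconnected {q : F₁ × F₂ | ‖q.1‖ < β ∧ ‖q.2‖ < ‖q.1‖} := by
  have : {q : F₁ × F₂ | ‖q.1‖ < β ∧ ‖q.2‖ < ‖q.1‖} =
      (fun mu : F₁ × F₂ => (mu.1, ‖mu.1‖ • mu.2)) ''
        ((ball (0:F₁) β \ {0}) ×ˢ ball (0:F₂) 1) := by
    ext q
    constructor
    · rintro ⟨h1, h2⟩
      have hm0 : q.1 ≠ 0 := by
        intro h0; rw [h0] at h2; simp at h2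
        exact absurd h2 (not_lt.2 (norm_nonneg _))
      have hnm : 0 < ‖q.1‖ := norm_pos_iff.2 hm0
      refine ⟨(q.1, ‖q.1‖⁻¹ • q.2), ⟨⟨by simpa using h1, hm0⟩, ?_⟩, ?_⟩
      · simp only [mem_ball, dist_zero_right, norm_smul, norm_inv, norm_norm]
        rw [inv_mul_lt_iff₀ hnm, mul_one]; exact h2
      · simp [smul_smul, mul_inv_cancel₀ hnm.ne']
    · rintro ⟨⟨m, u⟩, ⟨⟨hm, hm0⟩, hu⟩, rfl⟩
      have hm0' : (m : F₁) ≠ 0 := hm0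
      have hnm : 0 < ‖m‖ := norm_pos_iff.2 hm0'
      simp only [mem_ball, dist_zero_right] at hm hu
      refine ⟨hm, ?_⟩
      simp only [norm_smul, norm_norm]
      exact mul_lt_of_lt_one_right hnm hu
  rw [this]
  apply IsPreconnected.image
  · exact (aux_punctured_ball h hβ).prod (convex_ball 0 1).isPreconnected
  · exact (continuous_fst.prodMk (continuous_fst.norm.smul continuous_snd)).continuousOn

lemma aux_taylor {E F : Type*} [NormedAddCommGroup E] [NormedSpace ℝ E]
    [NormedAddCommGroup F] [NormedSpace ℝ F]
    {g : E → F} {V : Set E} (hV : IsOpen V) (hg : ContDiffOn ℝ (⊤:ℕ∞) g V)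
    {c : E} {δ ε : ℝ} (hball : ball c δ ⊆ V)
    (hosc : ∀ w ∈ ball c δ, ‖fderiv ℝ g w - fderiv ℝ g c‖ ≤ ε) :
    ∀ w ∈ ball c δ, ∀ w' ∈ ball c δ,
      ‖g w - g w' - (fderiv ℝ g c) (w - w')‖ ≤ ε * ‖w - w'‖ := by
  intro w hw w' hw'
  set A := fderiv ℝ g c with hA
  have hdiff : ∀ x ∈ ball c δ, DifferentiableAt ℝ (fun z => g z - A z) x := by
    intro x hx
    exact ((hg.differentiableOn (by norm_num)).differentiableAt
      (hV.mem_nhds (hball hx))).sub (A.differentiable.differentiableAt)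
  have hfd : ∀ x ∈ ball c δ, ‖fderiv ℝ (fun z => g z - A z) x‖ ≤ ε := by
    intro x hx
    have hgx : DifferentiableAt ℝ g x :=
      (hg.differentiableOn (by norm_num)).differentiableAt (hV.mem_nhds (hball hx))
    rw [fderiv_fun_sub hgx A.differentiable.differentiableAt, A.fderiv]
    exact hosc x hx
  have := Convex.norm_image_sub_le_of_norm_fderiv_le hdiff hfd (convex_ball c δ) hw' hw
  calc ‖g w - g w' - A (w - w')‖ = ‖(fun z => g z - A z) w - (fun z => g z - A z) w'‖ := by
        simp only [map_sub]; abel_nf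
      _ ≤ ε * ‖w - w'‖ := this

def GoodAt {d : ℕ} (f : EuclideanSpace ℝ (Fin d) → ℝ) (σ : ℝ)
    (Γ : Set (EuclideanSpace ℝ (Fin d))) (r : ℝ) (y : EuclideanSpace ℝ (Fin d)) : Prop :=
  ∃ (K : Set (EuclideanSpace ℝ (Fin d))) (η : ℝ), 0 < η ∧
    IsPreconnected K ∧ K ⊆ subLevel f σ ∩ tub Γ r ∧
    (∀ z, dist z y < η → f z < σ → z ∈ K) ∧
    (∀ η' > 0, ∃ z ∈ K, dist z y < η') ∧
    (∀ x, f x < σ → dist x y < r → ∃ P, IsPreconnected P ∧ P ⊆ subLevel f σ ∩ tub Γ r ∧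
      x ∈ P ∧ ∃ z ∈ P, f z < σ ∧ dist z y < η)


lemma glue {d : ℕ} {f : EuclideanSpace ℝ (Fin d) → ℝ} {σ r : ℝ}
    {Γ : Set (EuclideanSpace ℝ (Fin d))} (hΓ : IsConnected Γ)
    (hgood : ∀ y ∈ Γ, GoodAt f σ Γ r y) :
    IsConnected (subLevel f σ ∩ tub Γ r) := by
  classical
  set S := subLevel f σ ∩ tub Γ r with hSdef
  choose K η hη hKconn hKsub habs hnear hpath using hgood
  obtain ⟨y₀, hy₀⟩ := hΓ.nonempty
  obtain ⟨z₀, hz₀K, -⟩ := hnear y₀ hy₀ 1 one_pos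
  have hz₀S : z₀ ∈ S := hKsub y₀ hy₀ hz₀K
  set C₀ := connectedComponentIn S z₀ with hC₀def
  -- absorption: if w ∈ Γ is within η y hy / 2 of y ∈ Γ, then K w meets K y
  have hmeet : ∀ y (hy : y ∈ Γ) w (hw : w ∈ Γ), dist w y < η y hy / 2 →
      (K w hw ∩ K y hy).Nonempty := by
    intro y hy w hw hdist
    obtain ⟨z, hzK, hzw⟩ := hnear w hw (η y hy / 2) (by linarith [hη y hy])
    have hzS : z ∈ S := hKsub w hw hzK
    have hzy : dist z y < η y hy := by
      calc dist z y ≤ dist z w + dist w y := dist_triangle _ _ _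
        _ < η y hy / 2 + η y hy / 2 := add_lt_add hzw hdist
        _ = η y hy := by ring
    exact ⟨z, hzK, habs y hy z hzy hzS.1⟩
  -- transfer along a common point
  have htrans : ∀ y (hy : y ∈ Γ) w (hw : w ∈ Γ), (K w hw ∩ K y hy).Nonempty →
      K y hy ⊆ C₀ → K w hw ⊆ C₀ := by
    intro y hy w hw ⟨z, hzw, hzy⟩ hsub
    have hzC : z ∈ C₀ := hsub hzy
    have : C₀ = connectedComponentIn S z := connectedComponentIn_eq hzC
    rw [this]
    exact (hKconn w hw).subset_connectedComponentIn hzw (hKsub w hw)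
  -- the good set
  have hy₀good : K y₀ hy₀ ⊆ C₀ :=
    (hKconn y₀ hy₀).subset_connectedComponentIn hz₀K (hKsub y₀ hy₀)
  -- all of Γ is good
  have hallgood : ∀ y (hy : y ∈ Γ), K y hy ⊆ C₀ := by
    by_contra hbad
    push_neg at hbad
    set U : Set (EuclideanSpace ℝ (Fin d)) :=
      ⋃ (p : {y // ∃ hy : y ∈ Γ, K y hy ⊆ C₀}), ball p.1 (η p.1 p.2.choose / 2) with hUdef
    set V : Set (EuclideanSpace ℝ (Fin d)) :=
      ⋃ (p : {y // ∃ hy : y ∈ Γ, ¬ K y hy ⊆ C₀}), ball p.1 (η p.1 p.2.choose / 2) with hVdef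
    have hUopen : IsOpen U := isOpen_iUnion fun _ => isOpen_ball
    have hVopen : IsOpen V := isOpen_iUnion fun _ => isOpen_ball
    have hcover : Γ ⊆ U ∪ V := by
      intro y hy
      by_cases hgd : K y hy ⊆ C₀
      · left
        exact mem_iUnion.2 ⟨⟨y, hy, hgd⟩, mem_ball_self (by linarith [hη y (⟨hy, hgd⟩ : ∃ hy : y ∈ Γ, K y hy ⊆ C₀).choose])⟩
      · right
        exact mem_iUnion.2 ⟨⟨y, hy, hgd⟩, mem_ball_self (by linarith [hη y (⟨hy, hgd⟩ : ∃ hy : y ∈ Γ, ¬ K y hy ⊆ C₀).choose])⟩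
    have hUne : (Γ ∩ U).Nonempty := by
      refine ⟨y₀, hy₀, mem_iUnion.2 ⟨⟨y₀, hy₀, hy₀good⟩, mem_ball_self ?_⟩⟩
      have := hη y₀ (⟨hy₀, hy₀good⟩ : ∃ hy : y₀ ∈ Γ, K y₀ hy ⊆ C₀).choose
      linarith
    have hVne : (Γ ∩ V).Nonempty := by
      obtain ⟨y, hy, hnot⟩ := hbad
      refine ⟨y, hy, mem_iUnion.2 ⟨⟨y, hy, hnot⟩, mem_ball_self ?_⟩⟩
      have := hη y (⟨hy, hnot⟩ : ∃ hy : y ∈ Γ, ¬ K y hy ⊆ C₀).choose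
      linarith
    obtain ⟨w, hwΓ, hwU, hwV⟩ := hΓ.isPreconnected U V hUopen hVopen hcover hUne hVne
    obtain ⟨⟨y, hyex⟩, hwb⟩ := mem_iUnion.1 hwU
    obtain ⟨⟨y', hyex'⟩, hwb'⟩ := mem_iUnion.1 hwV
    have hy : y ∈ Γ := hyex.choose
    have hy' : y' ∈ Γ := hyex'.choose
    have hKw : K w hwΓ ⊆ C₀ := by
      refine htrans y hy w hwΓ (hmeet y hy w hwΓ ?_) hyex.choose_spec
      simpa [mem_ball] using hwb
    have : K y' hy' ⊆ C₀ := by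
      obtain ⟨z, hz1, hz2⟩ := hmeet y' hy' w hwΓ (by simpa [mem_ball] using hwb')
      exact htrans w hwΓ y' hy' ⟨z, hz2, hz1⟩ hKw
    exact hyex'.choose_spec this
  -- S ⊆ C₀
  have hSC : S ⊆ C₀ := by
    rintro x ⟨hxf, y, hyΓ, hxy⟩
    obtain ⟨P, hPconn, hPsub, hxP, z, hzP, hzf, hzy⟩ := hpath y hyΓ x hxf hxy
    have hzK : z ∈ K y hyΓ := habs y hyΓ z hzy hzf
    have hzC : z ∈ C₀ := hallgood y hyΓ hzK
    have : C₀ = connectedComponentIn S z := connectedComponentIn_eq hzC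
    rw [this]
    exact (hPconn.subset_connectedComponentIn hzP hPsub) hxP
  have hCS : C₀ ⊆ S := connectedComponentIn_subset S z₀
  have hSC₀ : S = C₀ := le_antisymm hSC hCS
  rw [hSC₀]
  exact isConnected_connectedComponentIn_iff.2 hz₀S

set_option maxHeartbeats 1000000 in
lemma local_good {d dΓ j : ℕ} {f : EuclideanSpace ℝ (Fin d) → ℝ} {σ : ℝ}
    {Γ : Set (EuclideanSpace ℝ (Fin d))}
    (hMB : IsMorseBottManifold d dΓ j f Γ) (hj : 2 ≤ j)
    (hσ : ∀ x ∈ Γ, f x = σ) {a : EuclideanSpace ℝ (Fin d)} (ha : a ∈ Γ) :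
    ∃ ρ r₁ : ℝ, 0 < ρ ∧ 0 < r₁ ∧ ∀ r, 0 < r → r < r₁ →
      ∀ y ∈ Γ, dist y a < ρ → GoodAt f σ Γ r y := by
  obtain ⟨hΓc, hΓconn, -, hchart⟩ := hMB
  obtain ⟨U, φ, ψ, hU, haU, hφ, hφU, hψ, hinv1, hinv2, hΓU, hform⟩ := hchart a ha
  have hfa : f a = σ := hσ a ha
  -- a ball around `a` inside `U`
  obtain ⟨ε₀, hε₀pos, hε₀U⟩ := Metric.isOpen_iff.1 hU a haU
  set ρ : ℝ := ε₀ / 4 with hρdef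
  have hρpos : 0 < ρ := by positivity
  have hcbU : closedBall a (2 * ρ) ⊆ U := by
    refine (closedBall_subset_ball ?_).trans hε₀U
    rw [hρdef]; linarith only [hε₀pos]
  -- Lipschitz constant for φ on closedBall a (2ρ)
  have hφdiff : ∀ x ∈ U, DifferentiableAt ℝ φ x := fun x hx =>
    (hφ.differentiableOn (by norm_num)).differentiableAt (hU.mem_nhds hx)
  have hφfc : ContinuousOn (fderiv ℝ φ) U := hφ.continuousOn_fderiv_of_isOpen hU (by exact_mod_cast le_top)
  obtain ⟨L₀, hL₀⟩ := (isCompact_closedBall a (2*ρ)).exists_bound_of_continuousOn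
    (hφfc.mono hcbU)
  set L : ℝ := max L₀ 1 with hLdef
  have hL1 : (1:ℝ) ≤ L := le_max_right _ _
  have hLpos : (0:ℝ) < L := lt_of_lt_of_le one_pos hL1
  have hφlip : ∀ u ∈ closedBall a (2*ρ), ∀ v ∈ closedBall a (2*ρ),
      ‖φ u - φ v‖ ≤ L * ‖u - v‖ := by
    intro u hu v hv
    exact Convex.norm_image_sub_le_of_norm_fderiv_le
      (fun x hx => hφdiff x (hcbU hx))
      (fun x hx => le_trans (hL₀ x hx) (le_max_left _ _))
      (convex_closedBall _ _) hv hu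
  -- the compact set of chart images of nearby points of Γ
  have hΓcb : Γ ∩ closedBall a ρ ⊆ U := fun x hx =>
    hcbU (closedBall_subset_closedBall (by linarith) hx.2)
  have hKcComp : IsCompact (φ '' (Γ ∩ closedBall a ρ)) :=
    (hΓc.inter_right isClosed_closedBall).image_of_continuousOn (hφ.continuousOn.mono hΓcb)
  set Kc := φ '' (Γ ∩ closedBall a ρ) with hKcdef
  have hKcsub : Kc ⊆ φ '' U := image_mono hΓcb
  obtain ⟨κ, hκpos, hκsub⟩ := hKcComp.exists_thickening_subset_open hφU hKcsub
  have hballφU : ∀ w₀ ∈ Kc, ball w₀ κ ⊆ φ '' U := by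
    intro w₀ hw₀ w hw
    exact hκsub (Metric.mem_thickening_iff.2 ⟨w₀, hw₀, hw⟩)
  -- ψ : differentiability, Lipschitz bound on balls around Kc
  have hψdiff : ∀ w ∈ φ '' U, DifferentiableAt ℝ ψ w := fun w hw =>
    (hψ.differentiableOn (by norm_num)).differentiableAt (hφU.mem_nhds hw)
  have hψfc : ContinuousOn (fderiv ℝ ψ) (φ '' U) := hψ.continuousOn_fderiv_of_isOpen hφU (by exact_mod_cast le_top)
  have hCT : IsCompact (cthickening (κ/2) Kc) := hKcComp.cthickening
  have hCTsub : cthickening (κ/2) Kc ⊆ φ '' U :=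
    (cthickening_subset_thickening' hκpos (by linarith only [hκpos]) Kc).trans hκsub
  have hballCT : ∀ w₀ ∈ Kc, ball w₀ (κ/2) ⊆ cthickening (κ/2) Kc := by
    intro w₀ hw₀ w hw
    exact mem_cthickening_of_dist_le w w₀ _ _ hw₀ (le_of_lt (by simpa [mem_ball] using hw))
  obtain ⟨L₀', hL₀'⟩ := hCT.exists_bound_of_continuousOn (hψfc.mono hCTsub)
  set L' : ℝ := max L₀' 1 with hL'def
  have hL'1 : (1:ℝ) ≤ L' := le_max_right _ _
  have hL'pos : (0:ℝ) < L' := lt_of_lt_of_le one_pos hL'1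
  have hψlip : ∀ w₀ ∈ Kc, ∀ w ∈ ball w₀ (κ/2), ∀ w' ∈ ball w₀ (κ/2),
      ‖ψ w - ψ w'‖ ≤ L' * ‖w - w'‖ := by
    intro w₀ hw₀ w hw w' hw'
    exact Convex.norm_image_sub_le_of_norm_fderiv_le
      (fun x hx => hψdiff x (hCTsub (hballCT w₀ hw₀ hx)))
      (fun x hx => le_trans (hL₀' x (hballCT w₀ hw₀ hx)) (le_max_left _ _))
      (convex_ball _ _) hw' hw
  -- modulus of continuity for fderiv ψ
  set ε : ℝ := 1 / (4 * L) with hεdef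
  have hεpos : 0 < ε := by positivity
  obtain ⟨δ₁, hδ₁pos, hδ₁⟩ := Metric.uniformContinuousOn_iff.1
    (hCT.uniformContinuousOn_of_continuous (hψfc.mono hCTsub)) ε hεpos
  set δ : ℝ := min (δ₁/2) (κ/4) with hδdef
  have hδpos : 0 < δ := by positivity
  have hδκ2 : δ ≤ κ/4 := min_le_right _ _
  -- Taylor estimate around points of Kc
  have htay : ∀ w₁ ∈ Kc, ∀ w ∈ ball w₁ δ, ∀ w' ∈ ball w₁ δ,
      ‖ψ w - ψ w' - (fderiv ℝ ψ w₁) (w - w')‖ ≤ ε * ‖w - w'‖ := by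
    intro w₁ hw₁
    refine aux_taylor hφU hψ ((ball_subset_ball (by linarith only [hδκ2, hκpos])).trans (hballφU w₁ hw₁)) ?_
    intro w hw
    have hwCT : w ∈ cthickening (κ/2) Kc :=
      hballCT w₁ hw₁ (ball_subset_ball (by linarith) hw)
    have hw₁CT : w₁ ∈ cthickening (κ/2) Kc := self_subset_cthickening _ hw₁
    have hδle : δ ≤ δ₁/2 := min_le_left _ _
    have := hδ₁ w hwCT w₁ hw₁CT (lt_of_lt_of_le (by simpa [mem_ball] using hw)
      (by linarith only [hδle, hδ₁pos]))
    rw [dist_eq_norm] at this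
    exact le_of_lt this
  -- the radius bound
  refine ⟨ρ, min ρ (min (δ/(2*L)) (κ/(8*L))), hρpos, by positivity, ?_⟩
  intro r hr0 hrr₁ y hyΓ hya
  have hrρ : r < ρ := lt_of_lt_of_le hrr₁ (min_le_left _ _)
  have hrδ : L * r < δ/2 := by
    have := lt_of_lt_of_le hrr₁ ((min_le_right _ _).trans (min_le_left _ _))
    calc L * r < L * (δ/(2*L)) := by exact (mul_lt_mul_iff_right₀ hLpos).2 this
      _ = δ/2 := by field_simp
  have hrκ : L * r < κ/8 := by
    have := lt_of_lt_of_le hrr₁ ((min_le_right _ _).trans (min_le_right _ _))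
    calc L * r < L * (κ/(8*L)) := by exact (mul_lt_mul_iff_right₀ hLpos).2 this
      _ = κ/8 := by field_simp
  -- chart data at y
  have hyU : y ∈ U := hcbU (mem_closedBall.2 (by linarith only [hya, hρpos]))
  have hycb : y ∈ closedBall a (2*ρ) := mem_closedBall.2 (by linarith only [hya, hρpos])
  set w₁ := φ y with hw₁def
  have hw₁Kc : w₁ ∈ Kc := ⟨y, ⟨hyΓ, mem_closedBall.2 (le_of_lt hya)⟩, rfl⟩
  have hyΓU : y ∈ {x | x ∈ U ∧ (φ x).2.1 = 0 ∧ (φ x).2.2 = 0} := by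
    rw [← hΓU]; exact ⟨hyΓ, hyU⟩
  obtain ⟨-, hm₁, hp₁⟩ := hyΓU
  have hψw₁ : ψ w₁ = y := hinv1 y hyU
  have hfy : f y = σ := hσ y hyΓ
  set β := min δ (r / L') / 2 with hβdef
  have hβpos : 0 < β := by positivity
  have hβδ : β < δ := by
    have : β ≤ δ / 2 := by
      rw [hβdef]
      have h := min_le_left δ (r / L')
      linarith only [h]
    linarith only [this, hδpos]
  have hβr : L' * β < r := by
    have h1 : β ≤ (r / L') / 2 := by
      rw [hβdef]
      have h := min_le_right δ (r / L')
      linarith only [h]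
    calc L' * β ≤ L' * ((r / L') / 2) := by
          exact mul_le_mul_of_nonneg_left h1 (le_of_lt hL'pos)
      _ = r / 2 := by field_simp
      _ < r := by linarith only [hr0]
  set Ω := {w : EuclideanSpace ℝ (Fin dΓ) × EuclideanSpace ℝ (Fin j) ×
      EuclideanSpace ℝ (Fin (d - dΓ - j)) | dist w w₁ < β ∧ ‖w.2.2‖ < ‖w.2.1‖} with hΩdef
  set K := ψ '' Ω with hKdef
  set η := min ρ (β / (2*L)) with hηdef
  have hηpos : 0 < η := by positivity
  have hηρ : η ≤ ρ := min_le_left _ _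
  have hηβ : L * η ≤ β / 2 := by
    have h1 : η ≤ β / (2*L) := min_le_right _ _
    calc L * η ≤ L * (β / (2*L)) := mul_le_mul_of_nonneg_left h1 (le_of_lt hLpos)
      _ = β / 2 := by field_simp
  -- Ω sits inside the chart image
  have hΩδ : Ω ⊆ ball w₁ δ := fun w hw => mem_ball.2 (lt_trans hw.1 hβδ)
  have hδκ : ball w₁ δ ⊆ ball w₁ (κ/2) := ball_subset_ball (by linarith only [hδκ2, hκpos])
  have hballδφU : ball w₁ δ ⊆ φ '' U :=
    (ball_subset_ball (by linarith only [hδκ2, hκpos])).trans (hballφU w₁ hw₁Kc)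
  have hΩφU : Ω ⊆ φ '' U := hΩδ.trans hballδφU
  have hmem : ∀ w ∈ φ '' U, ψ w ∈ U ∧ φ (ψ w) = w := by
    rintro w ⟨u, huU, rfl⟩
    refine ⟨by rw [hinv1 u huU]; exact huU, hinv2 _ ⟨u, huU, rfl⟩⟩
  have hfval : ∀ w ∈ φ '' U, f (ψ w) = σ - ‖w.2.1‖^2 + ‖w.2.2‖^2 := by
    intro w hw
    obtain ⟨hU', heq⟩ := hmem w hw
    rw [hform _ hU', heq, hfa]
  -- K ⊆ S
  have hKsubS : K ⊆ subLevel f σ ∩ tub Γ r := by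
    rintro z ⟨w, hwΩ, rfl⟩
    have hwφU : w ∈ φ '' U := hΩφU hwΩ
    constructor
    · show f (ψ w) < σ
      rw [hfval w hwφU]
      nlinarith only [norm_nonneg w.2.1, norm_nonneg w.2.2, hwΩ.2]
    · refine ⟨y, hyΓ, ?_⟩
      rw [← hψw₁, dist_eq_norm]
      calc ‖ψ w - ψ w₁‖ ≤ L' * ‖w - w₁‖ :=
            hψlip w₁ hw₁Kc w (hδκ (hΩδ hwΩ)) w₁ (mem_ball_self (by linarith only [hκpos]))
        _ ≤ L' * β := by
            have : ‖w - w₁‖ ≤ β := by rw [← dist_eq_norm]; exact le_of_lt hwΩ.1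
            exact mul_le_mul_of_nonneg_left this (le_of_lt hL'pos)
        _ < r := hβr
  -- K is preconnected
  have hrank : 1 < Module.rank ℝ (EuclideanSpace ℝ (Fin j)) := by
    have hr : Module.rank ℝ (EuclideanSpace ℝ (Fin j)) = j := by
      rw [← Module.finrank_eq_rank, finrank_euclideanSpace_fin]
    rw [hr]
    have h2 : (1:ℕ) < j := by omega
    exact_mod_cast h2
  have hΩeq : Ω = (ball w₁.1 β) ×ˢ {q : EuclideanSpace ℝ (Fin j) ×
      EuclideanSpace ℝ (Fin (d - dΓ - j)) | ‖q.1‖ < β ∧ ‖q.2‖ < ‖q.1‖} := by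
    ext w
    simp only [hΩdef, mem_setOf_eq, mem_prod, mem_ball]
    constructor
    · rintro ⟨hd, hlt⟩
      rw [Prod.dist_eq, Prod.dist_eq, hm₁, hp₁, dist_zero_right, dist_zero_right] at hd
      exact ⟨(max_lt_iff.1 hd).1, (max_lt_iff.1 (max_lt_iff.1 hd).2).1, hlt⟩
    · rintro ⟨h1, h2, h3⟩
      refine ⟨?_, h3⟩
      rw [Prod.dist_eq, Prod.dist_eq, hm₁, hp₁, dist_zero_right, dist_zero_right]
      exact max_lt h1 (max_lt h2 (h3.trans h2))
  have hKconn : IsPreconnected K := by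
    apply IsPreconnected.image
    · rw [hΩeq]
      exact (convex_ball _ _).isPreconnected.prod (aux_lambda hrank hβpos)
    · exact (hψ.continuousOn).mono hΩφU
  -- absorption
  have habs : ∀ z, dist z y < η → f z < σ → z ∈ K := by
    intro z hzy hzf
    have hzcb : z ∈ closedBall a (2*ρ) := mem_closedBall.2 (by
      calc dist z a ≤ dist z y + dist y a := dist_triangle _ _ _
        _ ≤ η + ρ := by linarith only [hzy, hya]
        _ ≤ 2*ρ := by linarith only [hηρ, hρpos])
    have hzU : z ∈ U := hcbU hzcb
    have hzball : dist (φ z) w₁ < β := by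
      rw [dist_eq_norm]
      calc ‖φ z - φ y‖ ≤ L * ‖z - y‖ := hφlip z hzcb y hycb
        _ = L * dist z y := by rw [dist_eq_norm]
        _ < L * η := by exact (mul_lt_mul_iff_right₀ hLpos).2 hzy
        _ ≤ β / 2 := hηβ
        _ < β := by linarith only [hβpos]
    have hlt : ‖(φ z).2.2‖ < ‖(φ z).2.1‖ := by
      have hz := hform z hzU
      rw [hfa] at hz
      nlinarith only [norm_nonneg (φ z).2.1, norm_nonneg (φ z).2.2, hz ▸ hzf]
    exact ⟨φ z, ⟨hzball, hlt⟩, hinv1 z hzU⟩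
  -- points of K arbitrarily close to y
  have hnear : ∀ η' > 0, ∃ z ∈ K, dist z y < η' := by
    intro η' hη'
    set c := min (β/2) (η'/(2*L')) with hcdef
    have hcpos : 0 < c := by positivity
    set e : EuclideanSpace ℝ (Fin j) := EuclideanSpace.single (⟨0, by omega⟩ : Fin j) c
      with hedef
    have he : ‖e‖ = c := by
      rw [hedef, EuclideanSpace.norm_single, Real.norm_eq_abs, abs_of_pos hcpos]
    set w' : EuclideanSpace ℝ (Fin dΓ) × EuclideanSpace ℝ (Fin j) ×
      EuclideanSpace ℝ (Fin (d - dΓ - j)) := (w₁.1, e, 0) with hw'def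
    have hw'd : dist w' w₁ = c := by
      rw [Prod.dist_eq, Prod.dist_eq]
      show max (dist w₁.1 w₁.1) (max (dist e w₁.2.1) (dist 0 w₁.2.2)) = c
      rw [hm₁, hp₁, dist_self, dist_zero_right, dist_zero_left, norm_zero, he]
      rw [max_eq_left (le_of_lt hcpos), max_eq_right (le_of_lt hcpos)]
    have hcβ2 : c ≤ β/2 := min_le_left _ _
    have hcη' : c ≤ η'/(2*L') := min_le_right _ _
    have hw'Ω : w' ∈ Ω := by
      refine ⟨by rw [hw'd]; linarith only [hcβ2, hβpos], ?_⟩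
      show ‖(0 : EuclideanSpace ℝ (Fin (d - dΓ - j)))‖ < ‖e‖
      rw [norm_zero, he]; exact hcpos
    refine ⟨ψ w', ⟨w', hw'Ω, rfl⟩, ?_⟩
    rw [← hψw₁, dist_eq_norm]
    have hcβ : c < β := lt_of_le_of_lt hcβ2 (by linarith only [hβpos])
    calc ‖ψ w' - ψ w₁‖ ≤ L' * ‖w' - w₁‖ := by
          refine hψlip w₁ hw₁Kc w' ?_ w₁ (mem_ball_self (by linarith only [hκpos]))
          rw [mem_ball, hw'd]; linarith only [hcβ2, hβδ, hδκ2, hκpos]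
      _ = L' * c := by rw [← dist_eq_norm, hw'd]
      _ ≤ L' * (η'/(2*L')) := mul_le_mul_of_nonneg_left hcη' (le_of_lt hL'pos)
      _ = η'/2 := by field_simp
      _ < η' := by linarith only [hη']
  -- the path clause
  have hpath : ∀ x, f x < σ → dist x y < r → ∃ P, IsPreconnected P ∧
      P ⊆ subLevel f σ ∩ tub Γ r ∧ x ∈ P ∧ ∃ z ∈ P, f z < σ ∧ dist z y < η := by
    intro x hfx hdxy
    have hxcb : x ∈ closedBall a (2*ρ) := mem_closedBall.2 (by
      calc dist x a ≤ dist x y + dist y a := dist_triangle _ _ _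
        _ ≤ r + ρ := by linarith only [hdxy, hya]
        _ ≤ 2*ρ := by linarith only [hrρ, hρpos])
    have hxU : x ∈ U := hcbU hxcb
    set w₀ := φ x with hw₀def
    have hψw₀ : ψ w₀ = x := hinv1 x hxU
    set D := dist x y with hDdef
    have hD0 : 0 < D := by
      rw [hDdef, dist_pos]
      intro h
      rw [h, hfy] at hfx
      exact lt_irrefl _ hfx
    have hDr : D < r := hdxy
    have hw01 : ‖w₀ - w₁‖ ≤ L * D := by
      rw [hDdef, dist_eq_norm]
      exact hφlip x hxcb y hycb
    have hLDδ : L * D < δ / 2 := by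
      calc L * D < L * r := (mul_lt_mul_iff_right₀ hLpos).2 hDr
        _ < δ / 2 := hrδ
    have hw01δ : ‖w₀ - w₁‖ < δ := by linarith only [hw01, hLDδ, hδpos]
    have hpm : ‖w₀.2.2‖ < ‖w₀.2.1‖ := by
      have hz := hform x hxU
      rw [hfa] at hz
      nlinarith only [norm_nonneg (φ x).2.1, norm_nonneg (φ x).2.2, hz ▸ hfx]
    set N := ‖w₀ - w₁‖ with hNdef
    have hN0 : 0 ≤ N := norm_nonneg _
    set τ := min (1/2) (η / (2 * L' * (N + 1))) with hτdef
    have hτpos : 0 < τ := by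
      apply lt_min (by norm_num)
      positivity
    have hτ12 : τ ≤ 1/2 := min_le_left _ _
    set γ : ℝ → EuclideanSpace ℝ (Fin dΓ) × EuclideanSpace ℝ (Fin j) ×
      EuclideanSpace ℝ (Fin (d - dΓ - j)) := fun s => w₀ + s • (w₁ - w₀) with hγdef
    have hγsub : ∀ s : ℝ, γ s - w₁ = (1-s) • (w₀ - w₁) := by
      intro s; rw [hγdef]; simp only; module
    have hγball : ∀ s ∈ Icc (0:ℝ) 1, γ s ∈ ball w₁ δ := by
      intro s hs
      rw [mem_ball, dist_eq_norm, hγsub s, norm_smul, Real.norm_eq_abs,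
        abs_of_nonneg (by linarith only [hs.2])]
      calc (1-s)*‖w₀-w₁‖ ≤ 1*‖w₀-w₁‖ :=
            mul_le_mul_of_nonneg_right (by linarith only [hs.1]) (norm_nonneg _)
        _ < δ := by rw [one_mul]; exact hw01δ
    have hIcc : Icc (0:ℝ) (1-τ) ⊆ Icc 0 1 := Icc_subset_Icc le_rfl (by linarith only [hτpos])
    set P := ψ '' (γ '' Icc (0:ℝ) (1-τ)) with hPdef
    have hsegsub : γ '' Icc (0:ℝ) (1-τ) ⊆ ball w₁ δ := by
      rintro _ ⟨s, hs, rfl⟩; exact hγball s (hIcc hs)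
    have hsegφU : γ '' Icc (0:ℝ) (1-τ) ⊆ φ '' U := hsegsub.trans hballδφU
    have hγcont : Continuous γ := by
      rw [hγdef]; exact continuous_const.add (continuous_id.smul continuous_const)
    have hPconn : IsPreconnected P :=
      IsPreconnected.image (IsPreconnected.image isPreconnected_Icc γ hγcont.continuousOn)
        ψ (hψ.continuousOn.mono hsegφU)
    have hγ21 : ∀ s : ℝ, (γ s).2.1 = (1-s) • w₀.2.1 := by
      intro s
      have h : (γ s).2.1 = w₀.2.1 + s • (w₁.2.1 - w₀.2.1) := rfl
      rw [h, hm₁]; module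
    have hγ22 : ∀ s : ℝ, (γ s).2.2 = (1-s) • w₀.2.2 := by
      intro s
      have h : (γ s).2.2 = w₀.2.2 + s • (w₁.2.2 - w₀.2.2) := rfl
      rw [h, hp₁]; module
    have hPsub : P ⊆ subLevel f σ ∩ tub Γ r := by
      rintro _ ⟨w, ⟨s, hs, rfl⟩, rfl⟩
      have hs01 : s ∈ Icc (0:ℝ) 1 := hIcc hs
      have h1s : τ ≤ 1 - s := by
        have h := hs.2; linarith only [h]
      have h1spos : 0 < 1 - s := lt_of_lt_of_le hτpos h1s
      have hγφU : γ s ∈ φ '' U := hsegφU ⟨s, hs, rfl⟩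
      constructor
      · show f (ψ (γ s)) < σ
        rw [hfval _ hγφU, hγ21 s, hγ22 s, norm_smul, norm_smul, Real.norm_eq_abs,
          abs_of_nonneg (le_of_lt h1spos)]
        have hsq : ‖w₀.2.2‖^2 < ‖w₀.2.1‖^2 := by
          nlinarith only [hpm, norm_nonneg w₀.2.2]
        nlinarith only [hsq, mul_pos h1spos h1spos]
      · refine ⟨y, hyΓ, ?_⟩
        set A := fderiv ℝ ψ w₁ with hAdef
        have hγsball : γ s ∈ ball w₁ δ := hγball s hs01
        have hw₀ball : w₀ ∈ ball w₁ δ := by rw [mem_ball, dist_eq_norm]; exact hw01δ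
        have he₀ : ‖ψ w₀ - ψ w₁ - A (w₀ - w₁)‖ ≤ ε * ‖w₀ - w₁‖ :=
          htay w₁ hw₁Kc w₀ hw₀ball w₁ (mem_ball_self hδpos)
        have hrs : ‖ψ (γ s) - ψ w₀ - A (γ s - w₀)‖ ≤ ε * ‖γ s - w₀‖ :=
          htay w₁ hw₁Kc (γ s) hγsball w₀ hw₀ball
        have hγw₀ : γ s - w₀ = s • (w₁ - w₀) := by rw [hγdef]; simp only; module
        have hAsm : A (γ s - w₀) = -(s • A (w₀ - w₁)) := by
          rw [hγw₀, map_smul, show w₁ - w₀ = -(w₀ - w₁) by abel, map_neg, smul_neg]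
        have hkey : ψ (γ s) - y = (1-s) • (x - y) + s • (ψ w₀ - ψ w₁ - A (w₀ - w₁))
            + (ψ (γ s) - ψ w₀ - A (γ s - w₀)) := by
          rw [hAsm, ← hψw₀, ← hψw₁]
          module
        have hnγ : ‖γ s - w₀‖ = s * N := by
          rw [hγw₀, norm_smul, Real.norm_eq_abs, abs_of_nonneg hs.1, norm_sub_rev]
        have hεN : ε * N ≤ ε * (L * D) := mul_le_mul_of_nonneg_left hw01 (le_of_lt hεpos)
        have hεLD : ε * (L * D) = D / 4 := by
          rw [hεdef]; field_simp
        rw [dist_eq_norm, hkey]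
        calc ‖(1-s) • (x - y) + s • (ψ w₀ - ψ w₁ - A (w₀ - w₁))
              + (ψ (γ s) - ψ w₀ - A (γ s - w₀))‖
            ≤ ‖(1-s) • (x - y)‖ + ‖s • (ψ w₀ - ψ w₁ - A (w₀ - w₁))‖
              + ‖ψ (γ s) - ψ w₀ - A (γ s - w₀)‖ := norm_add₃_le
          _ ≤ (1-s) * D + s * (ε * N) + ε * (s * N) := by
              have h1 : ‖(1-s) • (x - y)‖ = (1-s) * D := by
                rw [norm_smul, Real.norm_eq_abs, abs_of_nonneg (le_of_lt h1spos),
                  ← dist_eq_norm]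
              have h2 : ‖s • (ψ w₀ - ψ w₁ - A (w₀ - w₁))‖ ≤ s * (ε * N) := by
                rw [norm_smul, Real.norm_eq_abs, abs_of_nonneg hs.1]
                exact mul_le_mul_of_nonneg_left he₀ hs.1
              have h3 : ‖ψ (γ s) - ψ w₀ - A (γ s - w₀)‖ ≤ ε * (s * N) := by
                rw [← hnγ]; exact hrs
              linarith only [le_of_eq h1, h2, h3]
          _ ≤ (1-s) * D + s * (D/4) + s * (D/4) := by
              have hεND : ε * N ≤ D / 4 := le_of_le_of_eq hεN hεLD
              have h4 : s * (ε * N) ≤ s * (D/4) := mul_le_mul_of_nonneg_left hεND hs.1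
              have h5 : ε * (s * N) ≤ s * (D/4) := by
                rw [show ε * (s * N) = s * (ε * N) by ring]
                exact h4
              linarith only [h4, h5]
          _ ≤ D := by nlinarith only [mul_nonneg hs.1 (le_of_lt hD0)]
          _ < r := hDr
    have hxP : x ∈ P := by
      refine ⟨γ 0, ⟨0, ⟨le_refl 0, by linarith only [hτ12]⟩, rfl⟩, ?_⟩
      have : γ 0 = w₀ := by rw [hγdef]; simp
      rw [this, hψw₀]
    have hzP : ψ (γ (1-τ)) ∈ P := ⟨γ (1-τ), ⟨1-τ, ⟨by linarith only [hτ12], le_refl _⟩, rfl⟩, rfl⟩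
    refine ⟨P, hPconn, hPsub, hxP, ψ (γ (1-τ)), hzP, (hPsub hzP).1, ?_⟩
    have hγτ : γ (1-τ) - w₁ = τ • (w₀ - w₁) := by
      rw [hγsub (1-τ)]; congr 1; ring
    rw [← hψw₁, dist_eq_norm]
    have hγτball : γ (1-τ) ∈ ball w₁ δ := hγball (1-τ) ⟨by linarith only [hτ12], by linarith only [hτpos]⟩
    calc ‖ψ (γ (1-τ)) - ψ w₁‖ ≤ L' * ‖γ (1-τ) - w₁‖ :=
          hψlip w₁ hw₁Kc (γ (1-τ)) (hδκ hγτball) w₁ (mem_ball_self (by linarith only [hκpos]))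
      _ = L' * (τ * N) := by
          rw [hγτ, norm_smul, Real.norm_eq_abs, abs_of_nonneg (le_of_lt hτpos)]
      _ ≤ L' * ((η / (2 * L' * (N + 1))) * N) := by
          refine mul_le_mul_of_nonneg_left ?_ (le_of_lt hL'pos)
          exact mul_le_mul_of_nonneg_right (min_le_right _ _) hN0
      _ < η := by
          have heq : L' * ((η / (2 * L' * (N + 1))) * N) = η * N / (2 * (N + 1)) := by
            field_simp
          rw [heq, div_lt_iff₀ (by positivity)]
          have hpos2 : 0 < η * (N + 2) := mul_pos hηpos (by linarith only [hN0])
          nlinarith only [hpos2]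
  exact ⟨K, η, hηpos, hKconn, hKsubS, habs, hnear, hpath⟩


/-- **Connectedness of sublevel sets near critical manifolds of index ≥ 2**
(Proposition, part i). Let `f ∈ C^∞(ℝ^d; ℝ)` satisfy the Morse–Bott assumption, let `Γ`
be a critical submanifold (of dimension `dΓ`) on which `Hess f` has `j ≥ 2` negative
eigenvalues, and set `σ = f(Γ)`. Then for all sufficiently small `r > 0` the set
`X_σ ∩ (Γ + B(0,r))` is connected. -/
theorem sublevel_connected_near_higher_index_manifold
    {d dΓ j : ℕ} (f : EuclideanSpace ℝ (Fin d) → ℝ)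
    (Γ : Set (EuclideanSpace ℝ (Fin d))) (σ : ℝ)
    (hdim : dΓ + j ≤ d)
    (hf : ContDiff ℝ (⊤ : ℕ∞) f)
    (hMB : IsMorseBottManifold d dΓ j f Γ)
    (hj : 2 ≤ j)
    (hσ : ∀ x ∈ Γ, f x = σ) :
    ∃ r₀ > 0, ∀ r, 0 < r → r < r₀ → IsConnected (subLevel f σ ∩ tub Γ r) := by
  have hΓc : IsCompact Γ := hMB.1
  have hΓconn : IsConnected Γ := hMB.2.1
  have hloc : ∀ a : Γ, ∃ ρ r₁ : ℝ, 0 < ρ ∧ 0 < r₁ ∧ ∀ r, 0 < r → r < r₁ →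
      ∀ y ∈ Γ, dist y (a:EuclideanSpace ℝ (Fin d)) < ρ → GoodAt f σ Γ r y :=
    fun a => local_good hMB hj hσ a.2
  choose ρ r₁ hρpos hr₁pos hloc using hloc
  obtain ⟨t, ht⟩ := hΓc.elim_finite_subcover (fun a : Γ => ball (a : EuclideanSpace ℝ (Fin d)) (ρ a))
    (fun a => isOpen_ball) (fun x hx => mem_iUnion.2 ⟨⟨x, hx⟩, mem_ball_self (hρpos ⟨x, hx⟩)⟩)
  have htne : t.Nonempty := by
    obtain ⟨y₀, hy₀⟩ := hΓconn.nonempty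
    obtain ⟨i, hi, -⟩ := mem_iUnion₂.1 (ht hy₀)
    exact ⟨i, hi⟩
  refine ⟨t.inf' htne r₁, ?_, ?_⟩
  · have : (0:ℝ) < t.inf' htne r₁ := by
      rw [Finset.lt_inf'_iff]
      exact fun i _ => hr₁pos i
    exact this
  · intro r hr0 hrr₀
    refine glue hΓconn ?_
    intro y hy
    obtain ⟨i, hit, hib⟩ := mem_iUnion₂.1 (ht hy)
    exact hloc i r hr0 (lt_of_lt_of_le hrr₀ (Finset.inf'_le _ hit)) y hy (mem_ball.1 hib)

end
end

section
/- Let f ∈ C^∞(ℝ^d;ℝ) satisfy the Morse–Bott assumption and let Γ be a separating saddle manifold with σ = f(Γ). Then there exist exactly two connected components B_+ and B_− of X_σ = {f < σ} whose closures meet Γ, and moreover Γ ⊂ closure(B_+) ∩ closure(B_−). -/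
open Metric Set

noncomputable section

/-- A saddle manifold `Γ` with `σ = f(Γ)` is **separating** when, for all small `r > 0`,
`X_σ ∩ (Γ + B(0,r))` has exactly two connected components `A₊(r)` and `A₋(r)` which lie
in two disjoint connected components of `X_σ`. -/
def IsSeparating {d : ℕ} (f : EuclideanSpace ℝ (Fin d) → ℝ)
    (Γ : Set (EuclideanSpace ℝ (Fin d))) (σ : ℝ) : Prop :=
  ∃ r₀ > 0, ∀ r, 0 < r → r < r₀ →
    ∃ Aplus Aminus : Set (EuclideanSpace ℝ (Fin d)),
      HasExactlyTwoComponents (subLevel f σ ∩ tub Γ r) Aplus Aminus ∧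
      ∀ x ∈ Aplus, ∀ y ∈ Aminus,
        connectedComponentIn (subLevel f σ) x ≠ connectedComponentIn (subLevel f σ) y
lemma norm_euclidean_one (v : EuclideanSpace ℝ (Fin 1)) : ‖v‖ = |v 0| := by
  rw [EuclideanSpace.norm_eq]; simp [Real.sqrt_sq_eq_abs]

/-- Local chart lemma: near each point of Γ, the sublevel set splits into two
connected "sides" whose closures contain Γ near the point. -/
lemma chart_sides {d dΓ : ℕ} {f : EuclideanSpace ℝ (Fin d) → ℝ}
    {Γ : Set (EuclideanSpace ℝ (Fin d))} {σ : ℝ}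
    (hMB : IsMorseBottManifold d dΓ 1 f Γ) (hσ : ∀ x ∈ Γ, f x = σ)
    {a : EuclideanSpace ℝ (Fin d)} (ha : a ∈ Γ) {ρ : ℝ} (hρ : 0 < ρ) :
    ∃ V s₁ s₂ : Set (EuclideanSpace ℝ (Fin d)),
      IsOpen V ∧ a ∈ V ∧ V ⊆ Metric.ball a ρ ∧
      IsPreconnected s₁ ∧ IsPreconnected s₂ ∧
      V ∩ subLevel f σ = s₁ ∪ s₂ ∧
      Γ ∩ V ⊆ closure s₁ ∧ Γ ∩ V ⊆ closure s₂ := by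
  obtain ⟨-, -, -, hloc⟩ := hMB
  obtain ⟨U, φ, ψ, hU, haU, hφ, hφU, hψ, hψφ, hφψ, hΓU, hfeq⟩ := hloc a ha
  have hfa : f a = σ := hσ a ha
  set c := φ a with hc
  have hcU : c ∈ φ '' U := mem_image_of_mem φ haU
  have hψc : ψ c = a := hψφ a haU
  -- continuity of ψ at c
  have hψcont : ContinuousAt ψ c :=
    (hψ.continuousOn.continuousAt (hφU.mem_nhds hcU))
  -- choose δ
  have hmem : φ '' U ∩ ψ ⁻¹' Metric.ball a ρ ∈ nhds c := by
    refine Filter.inter_mem (hφU.mem_nhds hcU) ?_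
    exact hψcont (by rw [hψc]; exact Metric.ball_mem_nhds a hρ)
  obtain ⟨δ, hδ, hballsub⟩ := Metric.mem_nhds_iff.mp hmem
  have hballU : Metric.ball c δ ⊆ φ '' U := fun y hy => (hballsub hy).1
  -- the neighbourhood V
  set V : Set (EuclideanSpace ℝ (Fin d)) := U ∩ φ ⁻¹' Metric.ball c δ with hV
  have hVU : V ⊆ U := fun x hx => hx.1
  have hVopen : IsOpen V := hφ.continuousOn.isOpen_inter_preimage hU Metric.isOpen_ball
  have haV : a ∈ V := ⟨haU, by show dist (φ a) c < δ; rw [← hc, dist_self]; exact hδ⟩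
  have hψV : ∀ y ∈ Metric.ball c δ, ψ y ∈ V ∧ φ (ψ y) = y := by
    intro y hy
    obtain ⟨u, huU, rfl⟩ := hballU hy
    rw [hψφ u huU]
    exact ⟨⟨huU, hy⟩, rfl⟩
  have hVball : V ⊆ Metric.ball a ρ := by
    intro x hx
    have h2 := (hballsub hx.2).2
    rw [mem_preimage, hψφ x hx.1] at h2
    exact h2
  -- the two sides in coordinates
  set T₁ : Set (EuclideanSpace ℝ (Fin dΓ) × EuclideanSpace ℝ (Fin 1) ×
      EuclideanSpace ℝ (Fin (d - dΓ - 1))) :=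
    {y ∈ Metric.ball c δ | ‖y.2.2‖ < y.2.1 0} with hT₁
  set T₂ : Set (EuclideanSpace ℝ (Fin dΓ) × EuclideanSpace ℝ (Fin 1) ×
      EuclideanSpace ℝ (Fin (d - dΓ - 1))) :=
    {y ∈ Metric.ball c δ | y.2.1 0 < -‖y.2.2‖} with hT₂
  have hT₁ball : T₁ ⊆ Metric.ball c δ := fun y hy => hy.1
  have hT₂ball : T₂ ⊆ Metric.ball c δ := fun y hy => hy.1
  -- convexity of the sides
  have hconv : ∀ (T : Set _) (sgn : ℝ), (sgn = 1 ∨ sgn = -1) →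
      (T = {y ∈ Metric.ball c δ | ‖y.2.2‖ < sgn * y.2.1 0}) → Convex ℝ T := by
    rintro T sgn hsgn rfl
    intro y hy z hz p q hp hq hpq
    refine ⟨convex_ball c δ hy.1 hz.1 hp hq hpq, ?_⟩
    have h2 : (p • y + q • z).2.2 = p • y.2.2 + q • z.2.2 := rfl
    have h1 : (p • y + q • z).2.1 0 = p * y.2.1 0 + q * z.2.1 0 := rfl
    rw [h2, h1]
    have hn : ‖p • y.2.2 + q • z.2.2‖ ≤ p * ‖y.2.2‖ + q * ‖z.2.2‖ := by
      calc ‖p • y.2.2 + q • z.2.2‖ ≤ ‖p • y.2.2‖ + ‖q • z.2.2‖ := norm_add_le _ _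
      _ = p * ‖y.2.2‖ + q * ‖z.2.2‖ := by
          rw [norm_smul, norm_smul, Real.norm_eq_abs, Real.norm_eq_abs,
            abs_of_nonneg hp, abs_of_nonneg hq]
    have key : p * ‖y.2.2‖ + q * ‖z.2.2‖ < sgn * (p * y.2.1 0 + q * z.2.1 0) := by
      have hy2 := hy.2
      have hz2 := hz.2
      rcases hp.eq_or_lt with rfl | hp'
      · have hq1 : q = 1 := by linarith
        subst hq1; ring_nf; ring_nf at hz2; linarith
      · have t1 : p * ‖y.2.2‖ < p * (sgn * y.2.1 0) := by
          exact mul_lt_mul_of_pos_left hy.2 hp'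
        have t2 : q * ‖z.2.2‖ ≤ q * (sgn * z.2.1 0) := by
          exact mul_le_mul_of_nonneg_left hz.2.le hq
        nlinarith
    exact lt_of_le_of_lt hn (by nlinarith [key])
  have hconv₁ : Convex ℝ T₁ := by
    refine hconv T₁ 1 (Or.inl rfl) ?_
    rw [hT₁]; simp only [one_mul]
  have hconv₂ : Convex ℝ T₂ := by
    refine hconv T₂ (-1) (Or.inr rfl) ?_
    rw [hT₂]
    ext y; simp only [mem_setOf_eq, mem_sep_iff]
    constructor
    · rintro ⟨h1, h2⟩; exact ⟨h1, by linarith⟩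
    · rintro ⟨h1, h2⟩; exact ⟨h1, by linarith⟩
  -- the sides downstairs
  have hψT : ∀ T ⊆ Metric.ball c δ, IsPreconnected T → IsPreconnected (ψ '' T) := by
    intro T hTb hT
    exact hT.image ψ (hψ.continuousOn.mono (hTb.trans hballU))
  refine ⟨V, ψ '' T₁, ψ '' T₂, hVopen, haV, hVball,
    hψT T₁ hT₁ball hconv₁.isPreconnected, hψT T₂ hT₂ball hconv₂.isPreconnected, ?_, ?_, ?_⟩
  · -- V ∩ subLevel = s₁ ∪ s₂
    ext x
    constructor
    · rintro ⟨hxV, hxf⟩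
      have hfx := hfeq x (hVU hxV)
      have hfx' : f x < σ := hxf
      have hlt : ‖(φ x).2.2‖ ^ 2 < ‖(φ x).2.1‖ ^ 2 := by rw [hfx] at hfx'; linarith
      have hlt' : ‖(φ x).2.2‖ < ‖(φ x).2.1‖ :=
        lt_of_pow_lt_pow_left₀ 2 (norm_nonneg _) hlt
      rw [norm_euclidean_one] at hlt'
      have hxball : φ x ∈ Metric.ball c δ := hxV.2
      have hxψ : ψ (φ x) = x := hψφ x (hVU hxV)
      rcases lt_abs.mp hlt' with h | h
      · exact Or.inl ⟨φ x, ⟨hxball, h⟩, hxψ⟩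
      · exact Or.inr ⟨φ x, ⟨hxball, by linarith⟩, hxψ⟩
    · rintro (⟨y, hy, rfl⟩ | ⟨y, hy, rfl⟩)
      · obtain ⟨hyV, hyφ⟩ := hψV y (hT₁ball hy)
        refine ⟨hyV, ?_⟩
        have hfx := hfeq (ψ y) (hVU hyV)
        rw [hyφ] at hfx
        have h1 : ‖y.2.2‖ < ‖y.2.1‖ := by
          rw [norm_euclidean_one]
          exact lt_of_lt_of_le hy.2 (le_abs_self _)
        have h2 : ‖y.2.2‖ ^ 2 < ‖y.2.1‖ ^ 2 := pow_lt_pow_left₀ h1 (norm_nonneg _) (by norm_num)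
        show f (ψ y) < σ
        rw [hfx, hfa]; linarith
      · obtain ⟨hyV, hyφ⟩ := hψV y (hT₂ball hy)
        refine ⟨hyV, ?_⟩
        have hfx := hfeq (ψ y) (hVU hyV)
        rw [hyφ] at hfx
        have h1 : ‖y.2.2‖ < ‖y.2.1‖ := by
          rw [norm_euclidean_one]
          exact lt_of_lt_of_le (by linarith [hy.2]) (neg_le_abs _)
        have h2 : ‖y.2.2‖ ^ 2 < ‖y.2.1‖ ^ 2 := pow_lt_pow_left₀ h1 (norm_nonneg _) (by norm_num)
        show f (ψ y) < σ
        rw [hfx, hfa]; linarith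
  all_goals {
    intro a' ha'
    have ha'V := ha'.2
    have ha'U : a' ∈ Γ ∩ U := ⟨ha'.1, hVU ha'.2⟩
    rw [hΓU] at ha'U
    obtain ⟨ha'U', h21, h22⟩ := ha'U
    set g : ℝ → EuclideanSpace ℝ (Fin dΓ) × EuclideanSpace ℝ (Fin 1) ×
        EuclideanSpace ℝ (Fin (d - dΓ - 1)) :=
      fun s => ((φ a').1, s • EuclideanSpace.single (0 : Fin 1) (1:ℝ),
        (0 : EuclideanSpace ℝ (Fin (d - dΓ - 1)))) with hg
    have hg0 : g 0 = φ a' := by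
      rw [hg]; simp only [zero_smul]; rw [← h21, ← h22]
    have hgcont : Continuous g := by
      apply Continuous.prodMk continuous_const
      exact (continuous_id.smul continuous_const).prodMk continuous_const
    have hgb : ∀ᶠ s in nhds (0:ℝ), g s ∈ Metric.ball c δ := by
      apply hgcont.continuousAt.preimage_mem_nhds
      rw [hg0]
      exact Metric.isOpen_ball.mem_nhds ha'V.2
    have hψa' : ψ (φ a') = a' := hψφ a' (hVU ha'V)
    have hψca : ContinuousAt ψ (φ a') :=
      hψ.continuousOn.continuousAt (hφU.mem_nhds (hballU ha'V.2))
    rw [← hg0] at hψca hψa'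
    have htendfull : Filter.Tendsto (fun s => ψ (g s)) (nhds 0) (nhds a') := by
      have h := ContinuousAt.comp (x := (0:ℝ)) hψca hgcont.continuousAt
      simp only [ContinuousAt, Function.comp_def, Function.comp_apply] at h
      rw [hψa'] at h
      exact h
    have hgcomp : ∀ s : ℝ, (g s).2.1 0 = s ∧ (g s).2.2 = 0 := by
      intro s
      refine ⟨?_, rfl⟩
      show (s • EuclideanSpace.single (0 : Fin 1) (1:ℝ)) 0 = s
      simp [EuclideanSpace.single_apply]
    first
    | · apply mem_closure_of_tendsto (htendfull.mono_left (nhdsWithin_le_nhds (s := Ioi (0:ℝ))))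
        filter_upwards [hgb.filter_mono nhdsWithin_le_nhds, self_mem_nhdsWithin] with s hsb hs
        refine mem_image_of_mem ψ ⟨hsb, ?_⟩
        show ‖(g s).2.2‖ < (g s).2.1 0
        rw [(hgcomp s).2, (hgcomp s).1, norm_zero]
        exact hs
    | · apply mem_closure_of_tendsto (htendfull.mono_left (nhdsWithin_le_nhds (s := Iio (0:ℝ))))
        filter_upwards [hgb.filter_mono nhdsWithin_le_nhds, self_mem_nhdsWithin] with s hsb hs
        refine mem_image_of_mem ψ ⟨hsb, ?_⟩
        show (g s).2.1 0 < -‖(g s).2.2‖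
        rw [(hgcomp s).2, (hgcomp s).1, norm_zero]
        simpa using hs
  }

/-- **The two components adjacent to a separating saddle manifold** (Lemma).
Let `f ∈ C^∞(ℝ^d; ℝ)` satisfy the Morse–Bott assumption and let `Γ` be a separating
saddle manifold with `σ = f(Γ)`. Then there exist exactly two connected components `B₊`
and `B₋` of `X_σ = {f < σ}` whose closures meet `Γ`, and moreover
`Γ ⊆ closure B₊ ∩ closure B₋`. -/
theorem two_components_adjacent_to_separating_saddle
    {d dΓ : ℕ} (f : EuclideanSpace ℝ (Fin d) → ℝ)
    (Γ : Set (EuclideanSpace ℝ (Fin d))) (σ : ℝ)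
    (hdim : dΓ + 1 ≤ d)
    (hf : ContDiff ℝ (⊤ : ℕ∞) f)
    (hMB : IsMorseBottManifold d dΓ 1 f Γ)
    (hσ : ∀ x ∈ Γ, f x = σ)
    (hsep : IsSeparating f Γ σ) :
    ∃ Bplus Bminus : Set (EuclideanSpace ℝ (Fin d)),
      Bplus ≠ Bminus ∧
      (∃ x ∈ Bplus, Bplus = connectedComponentIn (subLevel f σ) x) ∧
      (∃ x ∈ Bminus, Bminus = connectedComponentIn (subLevel f σ) x) ∧
      Γ ⊆ closure Bplus ∩ closure Bminus ∧
      ∀ B : Set (EuclideanSpace ℝ (Fin d)),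
        (∃ x ∈ B, B = connectedComponentIn (subLevel f σ) x) →
        (closure B ∩ Γ).Nonempty → B = Bplus ∨ B = Bminus := by
  have hΓconn : IsConnected Γ := hMB.2.1
  obtain ⟨r₀, hr₀, hsepAll⟩ := hsep
  set r := r₀ / 2 with hrdef
  have hrpos : 0 < r := by positivity
  have hrlt : r < r₀ := by rw [hrdef]; linarith
  obtain ⟨Ap, Am, ⟨hpne, hmne, hunion, hdisj, hcompP, hcompM⟩, Hdiff⟩ := hsepAll r hrpos hrlt
  set S := subLevel f σ ∩ tub Γ r with hSdef
  have hSsub : S ⊆ subLevel f σ := inter_subset_left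
  have hPS : Ap ⊆ S := hunion ▸ subset_union_left
  have hMS : Am ⊆ S := hunion ▸ subset_union_right
  have hpreP : IsPreconnected Ap := by
    obtain ⟨x, hx⟩ := hpne; rw [← hcompP x hx]; exact isPreconnected_connectedComponentIn
  have hpreM : IsPreconnected Am := by
    obtain ⟨x, hx⟩ := hmne; rw [← hcompM x hx]; exact isPreconnected_connectedComponentIn
  -- constancy of components of X on preconnected subsets
  have hconst : ∀ t : Set (EuclideanSpace ℝ (Fin d)), IsPreconnected t → t ⊆ subLevel f σ →
      ∀ x ∈ t, ∀ y ∈ t, connectedComponentIn (subLevel f σ) x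
        = connectedComponentIn (subLevel f σ) y := by
    intro t ht hsub x hx y hy
    exact connectedComponentIn_eq (ht.subset_connectedComponentIn hx hsub hy)
  -- absorption into a component of S
  have habs : ∀ t : Set (EuclideanSpace ℝ (Fin d)), t.Nonempty → IsPreconnected t → t ⊆ S →
      t ⊆ Ap ∨ t ⊆ Am := by
    rintro t ⟨x, hx⟩ ht hsub
    rcases (hunion ▸ hsub hx : x ∈ Ap ∪ Am) with h | h
    · exact Or.inl ((hcompP x h) ▸ ht.subset_connectedComponentIn hx hsub)
    · exact Or.inr ((hcompM x h) ▸ ht.subset_connectedComponentIn hx hsub)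
  -- near points: both components come arbitrarily close to Γ
  have hnear : ∀ ε : ℝ, 0 < ε → (∃ z ∈ Ap, ∃ b ∈ Γ, dist z b < ε) ∧
      (∃ z ∈ Am, ∃ b ∈ Γ, dist z b < ε) := by
    intro ε hε
    set r' := min ε r / 2 with hr'def
    have hr'pos : 0 < r' := by rw [hr'def]; positivity
    have hr'r : r' ≤ r := by
      rw [hr'def]; have := min_le_right ε r; linarith
    have hr'ε : r' ≤ ε := by
      rw [hr'def]; have := min_le_left ε r; linarith
    obtain ⟨Ap', Am', ⟨hp', hm', hu', hd', hcp', hcm'⟩, Hdiff'⟩ :=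
      hsepAll r' hr'pos (lt_of_le_of_lt hr'r hrlt)
    have htubmono : tub Γ r' ⊆ tub Γ r := by
      rintro x ⟨y, hy, hxy⟩; exact ⟨y, hy, lt_of_lt_of_le hxy hr'r⟩
    have hS'S : subLevel f σ ∩ tub Γ r' ⊆ S := inter_subset_inter_right _ htubmono
    have hp'S : Ap' ⊆ S := (hu' ▸ subset_union_left).trans hS'S
    have hm'S : Am' ⊆ S := (hu' ▸ subset_union_right).trans hS'S
    have hpre' : IsPreconnected Ap' := by
      obtain ⟨x, hx⟩ := hp'; rw [← hcp' x hx]; exact isPreconnected_connectedComponentIn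
    have hpre'' : IsPreconnected Am' := by
      obtain ⟨x, hx⟩ := hm'; rw [← hcm' x hx]; exact isPreconnected_connectedComponentIn
    have hnotsame : ∀ C : Set (EuclideanSpace ℝ (Fin d)), IsPreconnected C →
        C ⊆ subLevel f σ → Ap' ⊆ C → Am' ⊆ C → False := by
      intro C hC hCs h1 h2
      obtain ⟨x, hx⟩ := hp'; obtain ⟨y, hy⟩ := hm'
      exact Hdiff' x hx y hy (hconst C hC hCs x (h1 hx) y (h2 hy))
    have hgetP : ∀ A'' : Set (EuclideanSpace ℝ (Fin d)), A''.Nonempty →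
        A'' ⊆ subLevel f σ ∩ tub Γ r' → ∀ A : Set (EuclideanSpace ℝ (Fin d)), A'' ⊆ A →
        ∃ z ∈ A, ∃ b ∈ Γ, dist z b < ε := by
      rintro A'' ⟨x, hx⟩ hsub A hA
      obtain ⟨b, hb, hxb⟩ := (hsub hx).2
      exact ⟨x, hA hx, b, hb, lt_of_lt_of_le hxb hr'ε⟩
    have hu'sub : Ap' ⊆ subLevel f σ ∩ tub Γ r' := hu' ▸ subset_union_left
    have hu'sub' : Am' ⊆ subLevel f σ ∩ tub Γ r' := hu' ▸ subset_union_right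
    rcases habs Ap' hp' hpre' hp'S with h1 | h1 <;> rcases habs Am' hm' hpre'' hm'S with h2 | h2
    · exact absurd (hnotsame Ap hpreP (hPS.trans hSsub) h1 h2) (by simp)
    · exact ⟨hgetP Ap' hp' hu'sub Ap h1, hgetP Am' hm' hu'sub' Am h2⟩
    · exact ⟨hgetP Am' hm' hu'sub' Ap h2, hgetP Ap' hp' hu'sub Am h1⟩
    · exact absurd (hnotsame Am hpreM (hMS.trans hSsub) h1 h2) (by simp)
  -- closure meets Γ
  have hclne : ∀ A : Set (EuclideanSpace ℝ (Fin d)), A.Nonempty →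
      (∀ ε : ℝ, 0 < ε → ∃ z ∈ A, ∃ b ∈ Γ, dist z b < ε) → (Γ ∩ closure A).Nonempty := by
    intro A hAne hA
    by_contra hempty
    rw [not_nonempty_iff_eq_empty] at hempty
    have hclne' : (closure A).Nonempty := hAne.closure
    have hpos : ∀ b ∈ Γ, 0 < infDist b (closure A) := by
      intro b hb
      refine (isClosed_closure.notMem_iff_infDist_pos hclne').mp ?_
      intro hmem
      have : b ∈ Γ ∩ closure A := ⟨hb, hmem⟩
      rw [hempty] at this
      exact this
    obtain ⟨b0, hb0, hmin⟩ := hMB.1.exists_isMinOn hΓconn.nonempty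
      (Metric.continuous_infDist_pt (closure A)).continuousOn
    obtain ⟨z, hz, b, hb, hdzb⟩ := hA _ (hpos b0 hb0)
    have h1 : infDist b0 (closure A) ≤ infDist b (closure A) := hmin hb
    have h2 : infDist b (closure A) ≤ dist b z := infDist_le_dist_of_mem (subset_closure hz)
    rw [dist_comm] at hdzb
    linarith
  -- openness of adjacency
  have hopen : ∀ A : Set (EuclideanSpace ℝ (Fin d)),
      (∀ x ∈ A, connectedComponentIn S x = A) → ∀ a ∈ Γ, a ∈ closure A →
      ∃ V, IsOpen V ∧ a ∈ V ∧ Γ ∩ V ⊆ closure A := by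
    intro A hcomp a haΓ hacl
    obtain ⟨V, s₁, s₂, hVo, haV, hVb, hs₁, hs₂, hVeq, hc₁, hc₂⟩ :=
      chart_sides hMB hσ haΓ hrpos
    obtain ⟨x, hxV, hxA⟩ := _root_.mem_closure_iff.mp hacl V hVo haV
    have hAS : A ⊆ S := (hcomp x hxA) ▸ connectedComponentIn_subset _ _
    have key : ∀ t : Set (EuclideanSpace ℝ (Fin d)), IsPreconnected t →
        t ⊆ V ∩ subLevel f σ → x ∈ t → Γ ∩ V ⊆ closure t →
        ∃ V', IsOpen V' ∧ a ∈ V' ∧ Γ ∩ V' ⊆ closure A := by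
      intro t hpre hsub hxt hcl
      refine ⟨V, hVo, haV, fun y hy => ?_⟩
      have htS : t ⊆ S := fun z hz =>
        ⟨(hsub hz).2, a, haΓ, mem_ball.mp (hVb (hsub hz).1)⟩
      have htA : t ⊆ A := (hcomp x hxA) ▸ hpre.subset_connectedComponentIn hxt htS
      exact closure_mono htA (hcl hy)
    have hxs : x ∈ s₁ ∪ s₂ := by
      rw [← hVeq]; exact ⟨hxV, hSsub (hAS hxA)⟩
    have hs₁sub : s₁ ⊆ V ∩ subLevel f σ := by rw [hVeq]; exact subset_union_left
    have hs₂sub : s₂ ⊆ V ∩ subLevel f σ := by rw [hVeq]; exact subset_union_right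
    rcases hxs with h | h
    · exact key s₁ hs₁ hs₁sub h hc₁
    · exact key s₂ hs₂ hs₂sub h hc₂
  -- Γ is contained in the closure
  have hall : ∀ A : Set (EuclideanSpace ℝ (Fin d)), A.Nonempty →
      (∀ x ∈ A, connectedComponentIn S x = A) →
      (∀ ε : ℝ, 0 < ε → ∃ z ∈ A, ∃ b ∈ Γ, dist z b < ε) → Γ ⊆ closure A := by
    intro A hne hcomp hnearA
    obtain ⟨a1, ha1Γ, ha1cl⟩ := hclne A hne hnearA
    have hex : ∀ a ∈ Γ ∩ closure A, ∃ V, IsOpen V ∧ a ∈ V ∧ Γ ∩ V ⊆ closure A :=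
      fun a ha => hopen A hcomp a ha.1 ha.2
    choose! V hVo hVmem hVsub using hex
    set W := ⋃ (a : EuclideanSpace ℝ (Fin d)) (_ : a ∈ Γ ∩ closure A), V a with hWdef
    have hWo : IsOpen W := isOpen_iUnion fun a => isOpen_iUnion fun h => hVo a h
    have hΓW : Γ ∩ W ⊆ closure A := by
      rintro y ⟨hyΓ, hyW⟩
      obtain ⟨a, ha, hyV⟩ := by simpa [hWdef] using hyW
      exact hVsub a ha ⟨hyΓ, hyV⟩
    have hsub2 : Γ ∩ closure A ⊆ W := by
      intro a ha
      exact mem_biUnion ha (hVmem a ha)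
    by_contra hnot
    rw [not_subset] at hnot
    obtain ⟨a2, ha2, ha2n⟩ := hnot
    have hcover : Γ ⊆ W ∪ (closure A)ᶜ := by
      intro a ha
      by_cases h : a ∈ closure A
      · exact Or.inl (hsub2 ⟨ha, h⟩)
      · exact Or.inr h
    obtain ⟨y, hyΓ, hyW, hyc⟩ := hΓconn.isPreconnected W (closure A)ᶜ hWo
      isClosed_closure.isOpen_compl hcover ⟨a1, ha1Γ, hsub2 ⟨ha1Γ, ha1cl⟩⟩ ⟨a2, ha2, ha2n⟩
    exact hyc (hΓW ⟨hyΓ, hyW⟩)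
  -- final assembly
  obtain ⟨xp, hxp⟩ := hpne
  obtain ⟨xm, hxm⟩ := hmne
  have hxpX : xp ∈ subLevel f σ := hSsub (hPS hxp)
  have hxmX : xm ∈ subLevel f σ := hSsub (hMS hxm)
  have hclp : Γ ⊆ closure Ap := hall Ap ⟨xp, hxp⟩ hcompP (fun ε hε => (hnear ε hε).1)
  have hclm : Γ ⊆ closure Am := hall Am ⟨xm, hxm⟩ hcompM (fun ε hε => (hnear ε hε).2)
  have hPB : Ap ⊆ connectedComponentIn (subLevel f σ) xp :=
    hpreP.subset_connectedComponentIn hxp (hPS.trans hSsub)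
  have hMBsub : Am ⊆ connectedComponentIn (subLevel f σ) xm :=
    hpreM.subset_connectedComponentIn hxm (hMS.trans hSsub)
  refine ⟨connectedComponentIn (subLevel f σ) xp, connectedComponentIn (subLevel f σ) xm,
    Hdiff xp hxp xm hxm, ⟨xp, mem_connectedComponentIn hxpX, rfl⟩,
    ⟨xm, mem_connectedComponentIn hxmX, rfl⟩, ?_, ?_⟩
  · intro a ha
    exact ⟨closure_mono hPB (hclp ha), closure_mono hMBsub (hclm ha)⟩
  · rintro B ⟨b0, hb0B, rfl⟩ ⟨a, hacl, haΓ⟩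
    obtain ⟨x, hxb, hxB⟩ := _root_.mem_closure_iff.mp hacl (ball a r) isOpen_ball
      (mem_ball_self hrpos)
    have hxX : x ∈ subLevel f σ := connectedComponentIn_subset _ _ hxB
    have hxS : x ∈ S := ⟨hxX, a, haΓ, mem_ball.mp hxb⟩
    have e1 : connectedComponentIn (subLevel f σ) b0 = connectedComponentIn (subLevel f σ) x :=
      hconst _ isPreconnected_connectedComponentIn (connectedComponentIn_subset _ _) b0 hb0B x hxB
    rcases (hunion ▸ hxS : x ∈ Ap ∪ Am) with h | h
    · exact Or.inl (e1.trans (hconst Ap hpreP (hPS.trans hSsub) x h xp hxp))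
    · exact Or.inr (e1.trans (hconst Am hpreM (hMS.trans hSsub) x h xm hxm))

end
end

section
/- Let φ be a local diffeomorphism of ℝ^d defined in a neighborhood of a point a ∈ ℝ^d. Then there exists r_a > 0 such that for all b ∈ B(a, r_a) and all 0 < r < r_a, the set φ(B(b, r)) is star-shaped with respect to the point φ(b), i.e. for every x ∈ B(b,r) and t ∈ [0,1], the point (1−t)φ(b) + tφ(x) belongs to φ(B(b,r)). -/
open Metric Set

set_option maxHeartbeats 1000000 in
/-- **Star-shapedness of diffeomorphic images of small balls.**
Let `φ` be a local diffeomorphism of `ℝ^d` defined in a neighborhood of a point `a`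
(i.e. there is an open neighborhood `U` of `a` on which `φ` is smooth, with open image,
admitting a smooth inverse `ψ`). Then there exists `r_a > 0` such that for all
`b ∈ B(a, r_a)` and all `0 < r < r_a`, the set `φ(B(b, r))` is star-shaped with respect
to `φ(b)`: for every `x ∈ B(b, r)` and `t ∈ [0, 1]`, the point `(1 - t) φ(b) + t φ(x)`
belongs to `φ(B(b, r))`. -/
theorem starshaped_image_of_small_balls
    {d : ℕ} (φ ψ : EuclideanSpace ℝ (Fin d) → EuclideanSpace ℝ (Fin d))
    (a : EuclideanSpace ℝ (Fin d)) (U : Set (EuclideanSpace ℝ (Fin d)))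
    (hU : IsOpen U) (haU : a ∈ U)
    (hφ : ContDiffOn ℝ (⊤ : ℕ∞) φ U)
    (hopen : IsOpen (φ '' U))
    (hψ : ContDiffOn ℝ (⊤ : ℕ∞) ψ (φ '' U))
    (hinv₁ : ∀ x ∈ U, ψ (φ x) = x)
    (hinv₂ : ∀ y ∈ φ '' U, φ (ψ y) = y) :
    ∃ ra > 0, ∀ b ∈ ball a ra, ∀ r, 0 < r → r < ra →
      ball b r ⊆ U ∧
      ∀ x ∈ ball b r, ∀ t ∈ Icc (0 : ℝ) 1,
        (1 - t) • φ b + t • φ x ∈ φ '' ball b r := by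
  have hφd : DifferentiableOn ℝ φ U := hφ.differentiableOn (by simp)
  have hψd : DifferentiableOn ℝ ψ (φ '' U) := hψ.differentiableOn (by simp)
  have hφat : ∀ z ∈ U, HasFDerivAt φ (fderiv ℝ φ z) z := fun z hz =>
    (hφd.differentiableAt (hU.mem_nhds hz)).hasFDerivAt
  have hψat : ∀ y ∈ φ '' U, HasFDerivAt ψ (fderiv ℝ ψ y) y := fun y hy =>
    (hψd.differentiableAt (hopen.mem_nhds hy)).hasFDerivAt
  set A := fderiv ℝ φ a with hAdef
  set B := fderiv ℝ ψ (φ a) with hBdef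
  -- B ∘ A = id
  have hBA : ∀ v, B (A v) = v := by
    have hcomp : HasFDerivAt (ψ ∘ φ) (B.comp A) a :=
      (hψat _ (mem_image_of_mem φ haU)).comp a (hφat a haU)
    have heq : ψ ∘ φ =ᶠ[nhds a] id := by
      filter_upwards [hU.mem_nhds haU] with z hz
      exact hinv₁ z hz
    have hid : HasFDerivAt (id : EuclideanSpace ℝ (Fin d) → EuclideanSpace ℝ (Fin d))
        (B.comp A) a := hcomp.congr_of_eventuallyEq heq.symm
    have huni : B.comp A = ContinuousLinearMap.id ℝ _ := hid.unique (hasFDerivAt_id a)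
    intro v
    exact DFunLike.congr_fun huni v
  set ε : ℝ := (‖A‖ + 1 + ‖B‖)⁻¹ with hεdef
  have hden : (0:ℝ) < ‖A‖ + 1 + ‖B‖ := by positivity
  have hε : 0 < ε := by positivity
  have hmul : ε * (‖A‖ + 1 + ‖B‖) = 1 := by
    rw [hεdef, inv_mul_cancel₀ (ne_of_gt hden)]
  have hden1 : 1 ≤ ‖A‖ + 1 + ‖B‖ := by
    have := norm_nonneg A; have := norm_nonneg B; linarith
  have hε1 : ε ≤ 1 := by nlinarith
  have hεK : ε * (‖A‖ + ε + ‖B‖) ≤ 1 := by nlinarith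
  -- neighborhood where fderiv φ is ε-close to A
  have hcontφ : ContinuousOn (fderiv ℝ φ) U :=
    hφ.continuousOn_fderiv_of_isOpen hU (by exact_mod_cast le_top)
  have h1 : ∀ᶠ z in nhds a, z ∈ U ∧ ‖fderiv ℝ φ z - A‖ ≤ ε := by
    have h2 := (hcontφ.continuousAt (hU.mem_nhds haU)) (closedBall_mem_nhds A hε)
    filter_upwards [hU.mem_nhds haU, h2] with z hz h2
    rw [Set.mem_preimage, Metric.mem_closedBall, dist_eq_norm] at h2
    exact ⟨hz, h2⟩
  obtain ⟨ρ₁, hρ₁pos, hρ₁⟩ := Metric.eventually_nhds_iff_ball.1 h1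
  -- neighborhood where fderiv ψ is ε-close to B
  have hcontψ : ContinuousOn (fderiv ℝ ψ) (φ '' U) :=
    hψ.continuousOn_fderiv_of_isOpen hopen (by exact_mod_cast le_top)
  have h3 : ∀ᶠ y in nhds (φ a), y ∈ φ '' U ∧ ‖fderiv ℝ ψ y - B‖ ≤ ε := by
    have h4 := (hcontψ.continuousAt (hopen.mem_nhds (mem_image_of_mem φ haU)))
      (closedBall_mem_nhds B hε)
    filter_upwards [hopen.mem_nhds (mem_image_of_mem φ haU), h4] with y hy h4
    rw [Set.mem_preimage, Metric.mem_closedBall, dist_eq_norm] at h4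
    exact ⟨hy, h4⟩
  obtain ⟨δ, hδpos, hδ⟩ := Metric.eventually_nhds_iff_ball.1 h3
  -- mean value inequalities
  have hMVTφ : ∀ z ∈ ball a ρ₁, ∀ w ∈ ball a ρ₁,
      ‖φ z - φ w - A (z - w)‖ ≤ ε * ‖z - w‖ := by
    intro z hz w hw
    exact Convex.norm_image_sub_le_of_norm_hasFDerivWithin_le'
      (fun p hp => ((hφat p (hρ₁ p hp).1).hasFDerivWithinAt))
      (fun p hp => (hρ₁ p hp).2) (convex_ball a ρ₁) hw hz
  have hMVTψ : ∀ z ∈ ball (φ a) δ, ∀ w ∈ ball (φ a) δ,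
      ‖ψ z - ψ w - B (z - w)‖ ≤ ε * ‖z - w‖ := by
    intro z hz w hw
    exact Convex.norm_image_sub_le_of_norm_hasFDerivWithin_le'
      (fun p hp => ((hψat p (hδ p hp).1).hasFDerivWithinAt))
      (fun p hp => (hδ p hp).2) (convex_ball (φ a) δ) hw hz
  set L : ℝ := ‖A‖ + ε with hLdef
  have hLpos : 0 < L := by positivity
  -- Lipschitz bound for φ on ball a ρ₁
  have hLip : ∀ z ∈ ball a ρ₁, ∀ w ∈ ball a ρ₁, ‖φ z - φ w‖ ≤ L * ‖z - w‖ := by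
    intro z hz w hw
    have h := hMVTφ z hz w hw
    have hA := A.le_opNorm (z - w)
    calc ‖φ z - φ w‖ = ‖A (z - w) + (φ z - φ w - A (z - w))‖ := by abel_nf
      _ ≤ ‖A (z - w)‖ + ‖φ z - φ w - A (z - w)‖ := norm_add_le _ _
      _ ≤ ‖A‖ * ‖z - w‖ + ε * ‖z - w‖ := add_le_add hA h
      _ = L * ‖z - w‖ := by ring
  refine ⟨min (ρ₁ / 2) (δ / (2 * L + 2)), by positivity, ?_⟩
  set ra := min (ρ₁ / 2) (δ / (2 * L + 2)) with hradef
  have hra1 : 2 * ra ≤ ρ₁ := by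
    have := min_le_left (ρ₁ / 2) (δ / (2 * L + 2)); simp only [hradef]; linarith
  have hra2 : 2 * ra ≤ δ / (L + 1) := by
    have hmle := min_le_right (ρ₁ / 2) (δ / (2 * L + 2))
    have hL1 : (L + 1) ≠ 0 := by positivity
    have hL2 : (2 * L + 2) ≠ 0 := by positivity
    have h2 : (2:ℝ) * (δ / (2 * L + 2)) = δ / (L + 1) := by
      field_simp
    simp only [hradef]; linarith
  intro b hb r hr0 hrra
  have hball2 : ball b r ⊆ ball a (2 * ra) := by
    intro z hz
    rw [mem_ball] at *
    calc dist z a ≤ dist z b + dist b a := dist_triangle z b a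
      _ < r + ra := by have := mem_ball.1 hb; linarith [hz]
      _ ≤ 2 * ra := by linarith
  have hballρ : ball b r ⊆ ball a ρ₁ := fun z hz =>
    mem_ball.2 (lt_of_lt_of_le (mem_ball.1 (hball2 hz)) hra1)
  have hballU : ball b r ⊆ U := fun z hz => (hρ₁ _ (hballρ hz)).1
  refine ⟨hballU, ?_⟩
  intro x hx t ht
  have hbρ : b ∈ ball a ρ₁ := by
    rw [mem_ball] at *
    have := mem_ball.1 hb
    have h2 : ra ≤ ρ₁ / 2 := min_le_left _ _
    linarith
  have hxρ : x ∈ ball a ρ₁ := hballρ hx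
  have hbU : b ∈ U := (hρ₁ _ hbρ).1
  have hxU : x ∈ U := hballU hx
  -- φ maps ball a (2 ra) into ball (φ a) δ
  have himg : ∀ z ∈ ball a ρ₁, dist z a < 2 * ra → φ z ∈ ball (φ a) δ := by
    intro z hz hz2
    rw [mem_ball, dist_eq_norm]
    have haρ : a ∈ ball a ρ₁ := mem_ball_self hρ₁pos
    have h := hLip z hz a haρ
    have hza : ‖z - a‖ < 2 * ra := by rwa [← dist_eq_norm]
    calc ‖φ z - φ a‖ ≤ L * ‖z - a‖ := h
      _ < L * (2 * ra) := by exact (mul_lt_mul_iff_right₀ hLpos).2 hza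
      _ ≤ L * (δ / (L + 1)) := by nlinarith
      _ < δ := by
          rw [mul_div_assoc']
          rw [div_lt_iff₀ (by positivity)]
          nlinarith
  have hφb : φ b ∈ ball (φ a) δ := himg b hbρ (by
    have := mem_ball.1 hb; linarith)
  have hφx : φ x ∈ ball (φ a) δ := himg x hxρ (mem_ball.1 (hball2 hx))
  obtain ⟨ht0, ht1⟩ := ht
  set y := (1 - t) • φ b + t • φ x with hydef
  have hy : y ∈ ball (φ a) δ :=
    (convex_ball (φ a) δ) hφb hφx (by linarith) ht0 (by ring)
  have hyU : y ∈ φ '' U := (hδ _ hy).1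
  have hφxU : φ x ∈ φ '' U := (hδ _ hφx).1
  -- the key estimates
  have h2 : ‖φ x - φ b - A (x - b)‖ ≤ ε * ‖x - b‖ := hMVTφ x hxρ b hbρ
  have h1 : ‖ψ y - ψ (φ x) - B (y - φ x)‖ ≤ ε * ‖y - φ x‖ := hMVTψ y hy (φ x) hφx
  have hyx : y - φ x = (1 - t) • (φ b - φ x) := by
    rw [hydef]; module
  have hψφx : ψ (φ x) = x := hinv₁ x hxU
  have hBAu : B (A (x - b)) = x - b := hBA _
  have hB1 : B (φ x - φ b - A (x - b)) = B (φ x) - B (φ b) - (x - b) := by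
    rw [B.map_sub (φ x - φ b) (A (x - b)), B.map_sub (φ x) (φ b), hBAu]
  have hB2 : B (y - φ x) = (1 - t) • (B (φ b) - B (φ x)) := by
    rw [hyx, B.map_smul, B.map_sub (φ b) (φ x)]
  have hkey : ψ y - b = t • (x - b) - (1 - t) • (B (φ x - φ b - A (x - b)))
      + (ψ y - ψ (φ x) - B (y - φ x)) := by
    rw [hψφx, hB1, hB2]
    module
  have hnyx : ‖y - φ x‖ ≤ (1 - t) * (L * ‖x - b‖) := by
    rw [hyx, norm_smul, Real.norm_eq_abs, abs_of_nonneg (by linarith)]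
    have : ‖φ b - φ x‖ ≤ L * ‖x - b‖ :=
      (norm_sub_rev (φ b) (φ x)).le.trans (hLip x hxρ b hbρ)
    exact mul_le_mul_of_nonneg_left this (by linarith)
  have hBe2 : ‖B (φ x - φ b - A (x - b))‖ ≤ ‖B‖ * (ε * ‖x - b‖) :=
    (B.le_opNorm _).trans (mul_le_mul_of_nonneg_left h2 (norm_nonneg B))
  set nu := ‖x - b‖ with hnudef
  have hnur : nu < r := by
    rw [hnudef, ← dist_eq_norm]; exact mem_ball.1 hx
  have hnu0 : 0 ≤ nu := norm_nonneg _
  have hfinal : ‖ψ y - b‖ < r := by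
    have hb1 : ‖ψ y - b‖ ≤ ‖t • (x - b)‖ + ‖(1 - t) • (B (φ x - φ b - A (x - b)))‖
        + ‖ψ y - ψ (φ x) - B (y - φ x)‖ := by
      rw [hkey]
      exact (norm_add_le _ _).trans (add_le_add_left (norm_sub_le _ _) _)
    have e1 : ‖t • (x - b)‖ = t * nu := by
      rw [norm_smul, Real.norm_eq_abs, abs_of_nonneg ht0]
    have e2 : ‖(1 - t) • (B (φ x - φ b - A (x - b)))‖ ≤ (1 - t) * (‖B‖ * (ε * nu)) := by
      rw [norm_smul, Real.norm_eq_abs, abs_of_nonneg (by linarith)]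
      exact mul_le_mul_of_nonneg_left hBe2 (by linarith)
    have e3 : ‖ψ y - ψ (φ x) - B (y - φ x)‖ ≤ ε * ((1 - t) * (L * nu)) :=
      h1.trans (mul_le_mul_of_nonneg_left hnyx (le_of_lt hε))
    have hsum : ‖ψ y - b‖ ≤ t * nu + (1 - t) * (ε * (‖B‖ + L)) * nu := by
      calc ‖ψ y - b‖ ≤ t * nu + (1 - t) * (‖B‖ * (ε * nu)) + ε * ((1 - t) * (L * nu)) := by
            rw [← e1]; exact hb1.trans (by linarith [e2, e3])
        _ = t * nu + (1 - t) * (ε * (‖B‖ + L)) * nu := by ring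
    have hco : ε * (‖B‖ + L) ≤ 1 := by
      rw [hLdef]; nlinarith [hεK]
    have h5 : (1 - t) * (ε * (‖B‖ + L)) * nu ≤ (1 - t) * 1 * nu :=
      mul_le_mul_of_nonneg_right
        (mul_le_mul_of_nonneg_left hco (by linarith)) hnu0
    nlinarith [hsum, h5]
  exact ⟨ψ y, mem_ball.2 (by rwa [dist_eq_norm]), hinv₂ y hyU⟩
end
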